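/- Membership commutes with the logical connectives: ⊨ (x ∈ ¬φ) = ¬(x ∈ φ); ⊨ (x ∈ φ₁∧φ₂) = (x∈φ₁) ∧ (x∈φ₂); ⊨ (x ∈ ∃y.φ) = ∃y.(x ∈ φ) for x, y distinct; and ⊨ x ∈ σ(φ₁,...,φᵢ,...,φₙ) = ∃y.(y ∈ φᵢ ∧ x ∈ σ(φ₁,...,y,...,φₙ)) for fresh y. -/

import Mathlib

namespace ML

structure Signature where
  S : Type
  Sym : Type
  n : Sym → ℕ
  arg : (f : Sym) → Fin (n f) → S
  res : Sym → S

inductive Pattern (σ : Signature) : σ.S → Type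
  | var (s : σ.S) (x : ℕ) : Pattern σ s
  | app (f : σ.Sym) (args : ∀ i : Fin (σ.n f), Pattern σ (σ.arg f i)) : Pattern σ (σ.res f)
  | neg {s : σ.S} (φ : Pattern σ s) : Pattern σ s
  | and {s : σ.S} (φ ψ : Pattern σ s) : Pattern σ s
  | ex {s : σ.S} (s' : σ.S) (x : ℕ) (φ : Pattern σ s) : Pattern σ s

namespace Pattern

variable {σ : Signature}

def or {s : σ.S} (φ ψ : Pattern σ s) : Pattern σ s := .neg (.and (.neg φ) (.neg ψ))

def imp {s : σ.S} (φ ψ : Pattern σ s) : Pattern σ s := .or (.neg φ) ψ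

def piff {s : σ.S} (φ ψ : Pattern σ s) : Pattern σ s := .and (.imp φ ψ) (.imp ψ φ)

def all {s : σ.S} (s' : σ.S) (x : ℕ) (φ : Pattern σ s) : Pattern σ s :=
  .neg (.ex s' x (.neg φ))

end Pattern

/-- Free variables of a pattern, as sort-variable pairs. -/
def FV {σ : Signature} : {s : σ.S} → Pattern σ s → Set ((s : σ.S) × ℕ)
  | _, .var s x => {⟨s, x⟩}
  | _, .app _ args => ⋃ i, FV (args i)
  | _, .neg φ => FV φ
  | _, .and φ ψ => FV φ ∪ FV ψ
  | _, .ex s' x φ => FV φ \ {⟨s', x⟩}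

structure Model (σ : Signature) where
  carrier : σ.S → Type
  nonempty : ∀ s, Nonempty (carrier s)
  interp : (f : σ.Sym) → (∀ i : Fin (σ.n f), carrier (σ.arg f i)) → Set (carrier (σ.res f))

def Val {σ : Signature} (M : Model σ) := (s : σ.S) → ℕ → M.carrier s

open Classical in
noncomputable def Val.upd {σ : Signature} {M : Model σ} (ρ : Val M) (s : σ.S) (x : ℕ)
    (a : M.carrier s) : Val M :=
  fun s' y => if h : s' = s ∧ y = x then cast (congrArg M.carrier h.1).symm a else ρ s' y

/-- Pattern evaluation: the set of elements matching the pattern. -/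
noncomputable def eval {σ : Signature} {M : Model σ} :
    {s : σ.S} → Pattern σ s → Val M → Set (M.carrier s)
  | _, .var s x, ρ => {ρ s x}
  | _, .app f args, ρ =>
      { b | ∃ a : ∀ i, M.carrier (σ.arg f i), (∀ i, a i ∈ eval (args i) ρ) ∧ b ∈ M.interp f a }
  | _, .neg φ, ρ => (eval φ ρ)ᶜ
  | _, .and φ ψ, ρ => eval φ ρ ∩ eval ψ ρ
  | _, .ex s' x φ, ρ => ⋃ a : M.carrier s', eval φ (ρ.upd s' x a)

def Sat {σ : Signature} (M : Model σ) {s : σ.S} (φ : Pattern σ s) : Prop :=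
  ∀ ρ : Val M, eval φ ρ = Set.univ

def Valid {σ : Signature} {s : σ.S} (φ : Pattern σ s) : Prop :=
  ∀ M : Model σ, Sat M φ

end ML
namespace ML

variable {σ : Signature}

/-- The argument sort of a unary (definedness) symbol. -/
def arg1 (d : σ.Sym) (hn : σ.n d = 1) : σ.S := σ.arg d ⟨0, by omega⟩

/-- Definedness applied to a pattern: `⌈φ⌉`. -/
noncomputable def ceil (d : σ.Sym) (hn : σ.n d = 1) (φ : Pattern σ (arg1 d hn)) :
    Pattern σ (σ.res d) :=
  .app d (fun j => cast (by
    have hj : j = (⟨0, by omega⟩ : Fin (σ.n d)) := Fin.ext (by have := j.isLt; omega)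
    rw [hj]; rfl) φ)

/-- The definedness axiom pattern `⌈x⌉`. -/
noncomputable def defAx (d : σ.Sym) (hn : σ.n d = 1) : Pattern σ (σ.res d) :=
  ceil d hn (.var (arg1 d hn) 0)

/-- Totality `⌊φ⌋ ≡ ¬⌈¬φ⌉`. -/
noncomputable def floor (d : σ.Sym) (hn : σ.n d = 1) (φ : Pattern σ (arg1 d hn)) :
    Pattern σ (σ.res d) :=
  .neg (ceil d hn (.neg φ))

/-- Equality pattern `φ = φ' ≡ ⌊φ ↔ φ'⌋`. -/
noncomputable def eqP (d : σ.Sym) (hn : σ.n d = 1) (φ φ' : Pattern σ (arg1 d hn)) :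
    Pattern σ (σ.res d) :=
  floor d hn (φ.piff φ')

/-- Membership pattern `x ∈ φ ≡ ⌈x ∧ φ⌉`. -/
noncomputable def mem (d : σ.Sym) (hn : σ.n d = 1) (x : ℕ) (φ : Pattern σ (arg1 d hn)) :
    Pattern σ (σ.res d) :=
  ceil d hn ((Pattern.var (arg1 d hn) x).and φ)

/-- The context `σ(φ₁,…,□,…,φₙ)` with `ψ` plugged into the `i`-th position. -/
def plug (f : σ.Sym) (i : Fin (σ.n f)) (args : ∀ j : Fin (σ.n f), Pattern σ (σ.arg f j))
    (ψ : Pattern σ (σ.arg f i)) : Pattern σ (σ.res f) :=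
  .app f (fun j => if h : j = i then cast (by rw [h]) ψ else args j)

/-- Bound variables of a pattern. -/
def BV : {s : σ.S} → Pattern σ s → Set ((s : σ.S) × ℕ)
  | _, .var _ _ => ∅
  | _, .app _ args => ⋃ i, BV (args i)
  | _, .neg φ => BV φ
  | _, .and φ ψ => BV φ ∪ BV ψ
  | _, .ex s' x φ => BV φ ∪ {⟨s', x⟩}

open Classical in
/-- Substitution `φ[ψ/x]` of pattern `ψ` for variable `x` of sort `t` (capture-free
provided the bound variables of `φ` are disjoint from the free variables of `ψ`). -/
noncomputable def subst : {s : σ.S} → Pattern σ s → (t : σ.S) → ℕ → Pattern σ t → Pattern σ s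
  | _, .var s' y, t, x, ψ =>
      if h : s' = t ∧ y = x then cast (by rw [h.1]) ψ else .var s' y
  | _, .app f args, t, x, ψ => .app f (fun i => subst (args i) t x ψ)
  | _, .neg φ, t, x, ψ => .neg (subst φ t x ψ)
  | _, .and φ₁ φ₂, t, x, ψ => .and (subst φ₁ t x ψ) (subst φ₂ t x ψ)
  | _, .ex s' y φ, t, x, ψ =>
      if s' = t ∧ y = x then .ex s' y φ else .ex s' y (subst φ t x ψ)

/-- Semantic entailment from a set of axiom patterns. -/
def Entails (F : Set ((s : σ.S) × Pattern σ s)) {s : σ.S} (φ : Pattern σ s) : Prop :=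
  ∀ M : Model σ, (∀ ψ ∈ F, Sat M ψ.2) → Sat M φ

/-- A pattern is functional in `M` iff it evaluates to a singleton under every valuation. -/
def Functional (M : Model σ) {s : σ.S} (φ : Pattern σ s) : Prop :=
  ∀ ρ : Val M, ∃ a : M.carrier s, eval φ ρ = {a}

end ML

namespace ML

variable {σ : Signature} {M : Model σ}

theorem Val.upd_same {s s' : σ.S} (hs : s' = s) (ρ : Val M) (x : ℕ) (a : M.carrier s) :
    (ρ.upd s x a) s' x = cast (congrArg M.carrier hs.symm) a := by
  subst hs; simp [Val.upd]

theorem Val.upd_ne {s s' : σ.S} (ρ : Val M) (x y : ℕ) (a : M.carrier s)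
    (h : (⟨s, x⟩ : (t : σ.S) × ℕ) ≠ ⟨s', y⟩) :
    (ρ.upd s x a) s' y = ρ s' y := by
  have hc : ¬ (s' = s ∧ y = x) := by rintro ⟨rfl, rfl⟩; exact h rfl
  simp [Val.upd, hc]

theorem eval_agree : ∀ {s : σ.S} (φ : Pattern σ s) (ρ ρ' : Val M),
    (∀ p ∈ FV φ, ρ p.1 p.2 = ρ' p.1 p.2) → eval φ ρ = eval φ ρ'
  | _, .var s x, ρ, ρ', h => by
      simp only [eval]; rw [h ⟨s, x⟩ rfl]
  | _, .app f args, ρ, ρ', h => by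
      have hj : ∀ j, eval (args j) ρ = eval (args j) ρ' := fun j =>
        eval_agree (args j) ρ ρ' (fun p hp => h p (Set.mem_iUnion.2 ⟨j, hp⟩))
      simp only [eval, hj]
  | _, .neg φ, ρ, ρ', h => by simp only [eval, eval_agree φ ρ ρ' h]
  | _, .and φ ψ, ρ, ρ', h => by
      simp only [eval, eval_agree φ ρ ρ' (fun p hp => h p (Or.inl hp)),
        eval_agree ψ ρ ρ' (fun p hp => h p (Or.inr hp))]
  | _, .ex s' x φ, ρ, ρ', h => by
      simp only [eval]
      refine Set.iUnion_congr fun a => ?_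
      refine eval_agree φ _ _ (fun p hp => ?_)
      obtain ⟨ps, pz⟩ := p
      by_cases hp' : (⟨ps, pz⟩ : (t : σ.S) × ℕ) = ⟨s', x⟩
      · obtain ⟨h1, h2⟩ := Sigma.mk.inj_iff.1 hp'
        subst h1
        obtain rfl := eq_of_heq h2
        rw [Val.upd_same rfl, Val.upd_same rfl]
      · have hne : (⟨s', x⟩ : (t : σ.S) × ℕ) ≠ ⟨ps, pz⟩ := fun e => hp' e.symm
        rw [Val.upd_ne _ _ _ _ hne, Val.upd_ne _ _ _ _ hne]
        exact h ⟨ps, pz⟩ ⟨hp, hp'⟩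

theorem eval_cast {s s' : σ.S} (hs : s = s') (h : Pattern σ s = Pattern σ s')
    (φ : Pattern σ s) (ρ : Val M) :
    eval (cast h φ) ρ = cast (congrArg (fun t => Set (M.carrier t)) hs) (eval φ ρ) := by
  subst hs; simp

theorem mem_cast_set {s s' : σ.S} (hs : s = s') (S : Set (M.carrier s)) (b : M.carrier s') :
    b ∈ cast (congrArg (fun t => Set (M.carrier t)) hs) S ↔
      cast (congrArg M.carrier hs.symm) b ∈ S := by
  subst hs; simp

theorem cast_ite_univ {s s' : σ.S} (hs : s = s') (P : Prop) [Decidable P] :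
    cast (congrArg (fun t => Set (M.carrier t)) hs)
        (if P then (Set.univ : Set (M.carrier s)) else ∅) =
      if P then (Set.univ : Set (M.carrier s')) else ∅ := by
  subst hs; rfl

def i0 (d : σ.Sym) (hn : σ.n d = 1) : Fin (σ.n d) := ⟨0, hn ▸ Nat.one_pos⟩

theorem ceil_eval (d : σ.Sym) (hn : σ.n d = 1) (ψ : Pattern σ (arg1 d hn)) (ρ : Val M) :
    eval (ceil d hn ψ) ρ =
      {b | ∃ a : ∀ i, M.carrier (σ.arg d i),
        a (i0 d hn) ∈ eval ψ ρ ∧ b ∈ M.interp d a} := by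
  have hi : ∀ i : Fin (σ.n d), i = i0 d hn := fun i => Fin.ext (by have := i.isLt; omega)
  have hc : ∀ (pf : Pattern σ (arg1 d hn) = Pattern σ (σ.arg d (i0 d hn))),
      eval (cast pf ψ) ρ = eval ψ ρ := fun pf => by
    exact (eval_cast rfl pf ψ ρ).trans (cast_eq _ _)
  ext b
  rw [ceil]
  simp only [eval, Set.mem_setOf_eq]
  constructor
  · rintro ⟨a, h1, h2⟩
    refine ⟨a, ?_, h2⟩
    have h3 := h1 (i0 d hn)
    rwa [hc] at h3
  · rintro ⟨a, h1, h2⟩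
    refine ⟨a, fun i => ?_, h2⟩
    have hii := hi i
    subst hii
    rw [hc]
    exact h1

theorem defAx_spec (d : σ.Sym) (hn : σ.n d = 1) (hM : Sat M (defAx d hn))
    (c : M.carrier (arg1 d hn)) (b : M.carrier (σ.res d)) :
    ∃ a : ∀ i, M.carrier (σ.arg d i), a (i0 d hn) = c ∧ b ∈ M.interp d a := by
  classical
  let ρ₀ : Val M := fun s _ => Classical.choice (M.nonempty s)
  have h := hM (ρ₀.upd (arg1 d hn) 0 c)
  rw [defAx, ceil_eval] at h
  have hb : b ∈ {b | ∃ a : ∀ i, M.carrier (σ.arg d i),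
      a (i0 d hn) ∈ eval (Pattern.var (arg1 d hn) 0) (ρ₀.upd (arg1 d hn) 0 c)
      ∧ b ∈ M.interp d a} := by rw [h]; trivial
  obtain ⟨a, h1, h2⟩ := hb
  refine ⟨a, ?_, h2⟩
  simp only [eval, Set.mem_singleton_iff] at h1
  rw [h1, Val.upd_same rfl]
  exact cast_eq _ c

open Classical in
theorem mem_eval (d : σ.Sym) (hn : σ.n d = 1) (hM : Sat M (defAx d hn))
    (x : ℕ) (φ : Pattern σ (arg1 d hn)) (ρ : Val M) :
    eval (mem d hn x φ) ρ =
      if ρ (arg1 d hn) x ∈ eval φ ρ then Set.univ else ∅ := by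
  classical
  rw [mem, ceil_eval]
  by_cases hx : ρ (arg1 d hn) x ∈ eval φ ρ
  · simp only [hx, if_true]
    ext b
    simp only [Set.mem_setOf_eq, Set.mem_univ, iff_true]
    obtain ⟨a, ha, hb⟩ := defAx_spec d hn hM (ρ (arg1 d hn) x) b
    refine ⟨a, ?_, hb⟩
    simp only [eval, Set.mem_inter_iff, Set.mem_singleton_iff]
    exact ⟨ha, ha ▸ hx⟩
  · simp only [hx, if_false]
    ext b
    simp only [Set.mem_setOf_eq, Set.mem_empty_iff_false, iff_false]
    rintro ⟨a, ha, -⟩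
    simp only [eval, Set.mem_inter_iff, Set.mem_singleton_iff] at ha
    exact hx (ha.1 ▸ ha.2)

theorem eval_neg {s : σ.S} (φ : Pattern σ s) (ρ : Val M) :
    eval φ.neg ρ = (eval φ ρ)ᶜ := rfl

theorem eval_and {s : σ.S} (φ ψ : Pattern σ s) (ρ : Val M) :
    eval (φ.and ψ) ρ = eval φ ρ ∩ eval ψ ρ := rfl

theorem eval_ex {s s' : σ.S} (x : ℕ) (φ : Pattern σ s) (ρ : Val M) :
    eval (Pattern.ex s' x φ) ρ = ⋃ a : M.carrier s', eval φ (ρ.upd s' x a) := rfl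

theorem mem_eval_var {s : σ.S} {x : ℕ} {ρ : Val M} {b : M.carrier s} :
    b ∈ eval (Pattern.var s x) ρ ↔ b = ρ s x := Iff.rfl

theorem mem_eval_app {f : σ.Sym} {args : ∀ j : Fin (σ.n f), Pattern σ (σ.arg f j)}
    {ρ : Val M} {b : M.carrier (σ.res f)} :
    b ∈ eval (Pattern.app f args) ρ ↔
      ∃ a : ∀ j, M.carrier (σ.arg f j), (∀ j, a j ∈ eval (args j) ρ) ∧ b ∈ M.interp f a :=
  Iff.rfl

theorem iUnion_ite_univ {α β : Type*} (P : α → Prop) [∀ a, Decidable (P a)]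
    [Decidable (∃ a, P a)] :
    (⋃ a : α, if P a then (Set.univ : Set β) else ∅) =
      if ∃ a, P a then Set.univ else ∅ := by
  by_cases h : ∃ a, P a
  · obtain ⟨a, ha⟩ := h
    rw [if_pos ⟨a, ha⟩]
    apply Set.eq_univ_of_univ_subset
    intro b _
    exact Set.mem_iUnion.2 ⟨a, by simp [ha]⟩
  · rw [if_neg h]
    push_neg at h
    rw [Set.iUnion_eq_empty]
    intro a
    simp [h a]

theorem ite_inter_ite_univ {β : Type*} (P Q : Prop) [Decidable P] [Decidable Q] :
    (if P then (Set.univ : Set β) else ∅) ∩ (if Q then Set.univ else ∅) =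
      if P ∧ Q then Set.univ else ∅ := by
  by_cases hP : P <;> by_cases hQ : Q <;> simp [hP, hQ]

end ML

/-- membership commutes with the logical connectives:
`(x ∈ ¬φ) = ¬(x ∈ φ)`, `(x ∈ φ₁∧φ₂) = (x∈φ₁)∧(x∈φ₂)`,
`(x ∈ ∃y.φ) = ∃y.(x∈φ)` for distinct `x, y`, and
`x ∈ σ(…,φᵢ,…) = ∃y.(y ∈ φᵢ ∧ x ∈ σ(…,y,…))` for fresh `y`
(the equalities stated as equal evaluations in every model with definedness). -/
theorem stmt17 {σ : ML.Signature} (d : σ.Sym) (hn : σ.n d = 1) :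
    (∀ (x : ℕ) (φ : ML.Pattern σ (ML.arg1 d hn)) (M : ML.Model σ),
      ML.Sat M (ML.defAx d hn) → ∀ ρ : ML.Val M,
      ML.eval (ML.mem d hn x φ.neg) ρ = ML.eval (ML.Pattern.neg (ML.mem d hn x φ)) ρ) ∧
    (∀ (x : ℕ) (φ₁ φ₂ : ML.Pattern σ (ML.arg1 d hn)) (M : ML.Model σ),
      ML.Sat M (ML.defAx d hn) → ∀ ρ : ML.Val M,
      ML.eval (ML.mem d hn x (φ₁.and φ₂)) ρ =
        ML.eval ((ML.mem d hn x φ₁).and (ML.mem d hn x φ₂)) ρ) ∧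
    (∀ (x y : ℕ) (sy : σ.S) (φ : ML.Pattern σ (ML.arg1 d hn)),
      (⟨sy, y⟩ : (t : σ.S) × ℕ) ≠ ⟨ML.arg1 d hn, x⟩ →
      ∀ M : ML.Model σ, ML.Sat M (ML.defAx d hn) → ∀ ρ : ML.Val M,
      ML.eval (ML.mem d hn x (ML.Pattern.ex sy y φ)) ρ =
        ML.eval (ML.Pattern.ex sy y (ML.mem d hn x φ)) ρ) ∧
    (∀ (d₃ : σ.Sym) (hn₃ : σ.n d₃ = 1) (f : σ.Sym) (hf : σ.res f = ML.arg1 d hn)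
      (i : Fin (σ.n f)) (h₃a : ML.arg1 d₃ hn₃ = σ.arg f i) (h₃r : σ.res d₃ = σ.res d)
      (args : ∀ j : Fin (σ.n f), ML.Pattern σ (σ.arg f j)) (x y : ℕ),
      (⟨σ.arg f i, y⟩ : (t : σ.S) × ℕ) ∉ ML.FV (ML.Pattern.app f args) →
      (⟨σ.arg f i, y⟩ : (t : σ.S) × ℕ) ≠ ⟨ML.arg1 d hn, x⟩ →
      ∀ M : ML.Model σ, ML.Sat M (ML.defAx d hn) → ML.Sat M (ML.defAx d₃ hn₃) →
      ∀ ρ : ML.Val M,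
      ML.eval (ML.mem d hn x (cast (by rw [hf]) (ML.Pattern.app f args))) ρ =
        ML.eval (ML.Pattern.ex (σ.arg f i) y
          (ML.Pattern.and
            ((cast (by rw [h₃r]) (ML.mem d₃ hn₃ y (cast (by rw [h₃a]) (args i)))) :
              ML.Pattern σ (σ.res d))
            (ML.mem d hn x
              (cast (by rw [hf]) (ML.plug f i args (ML.Pattern.var (σ.arg f i) y)))))) ρ) := by
  classical
  refine ⟨?_, ?_, ?_, ?_⟩
  · intro x φ M hM ρ
    simp only [ML.mem_eval d hn hM, ML.eval_neg, Set.mem_compl_iff]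
    by_cases h : ρ (ML.arg1 d hn) x ∈ ML.eval φ ρ <;> simp [h]
  · intro x φ₁ φ₂ M hM ρ
    simp only [ML.mem_eval d hn hM, ML.eval_and, Set.mem_inter_iff]
    by_cases h1 : ρ (ML.arg1 d hn) x ∈ ML.eval φ₁ ρ <;>
      by_cases h2 : ρ (ML.arg1 d hn) x ∈ ML.eval φ₂ ρ <;> simp [h1, h2]
  · intro x y sy φ hne M hM ρ
    simp only [ML.mem_eval d hn hM, ML.eval_ex, Set.mem_iUnion,
      fun a => ML.Val.upd_ne (M := M) ρ y x a hne]
    rw [ML.iUnion_ite_univ]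
  · intro d₃ hn₃ f hf i h₃a h₃r args x y hfresh hxy M hM hM₃ ρ
    have hfresh' : ∀ j, (⟨σ.arg f i, y⟩ : (t : σ.S) × ℕ) ∉ ML.FV (args j) := by
      intro j hj; exact hfresh (Set.mem_iUnion.2 ⟨j, hj⟩)
    have hagree : ∀ (j : Fin (σ.n f)) (a : M.carrier (σ.arg f i)),
        ML.eval (args j) (ML.Val.upd ρ (σ.arg f i) y a) = ML.eval (args j) ρ := by
      intro j a
      refine ML.eval_agree _ _ _ (fun p hp => ?_)
      refine ML.Val.upd_ne _ _ _ _ (fun e => hfresh' j ?_)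
      rw [e]; exact hp
    simp only [ML.mem_eval d hn hM, ML.mem_eval d₃ hn₃ hM₃, ML.eval_ex, ML.eval_and,
      ML.eval_cast hf, ML.eval_cast h₃a.symm, ML.eval_cast h₃r,
      ML.cast_ite_univ h₃r, ML.mem_cast_set hf, ML.mem_cast_set h₃a.symm,
      fun a => ML.Val.upd_ne (M := M) ρ y x a hxy,
      fun a => ML.Val.upd_same (M := M) h₃a ρ y a, cast_cast, cast_eq, hagree,
      ML.ite_inter_ite_univ]
    rw [ML.iUnion_ite_univ]
    refine if_congr ?_ rfl rfl
    simp only [ML.plug, ML.mem_eval_app]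
    constructor
    · rintro ⟨aa, haa, hb⟩
      refine ⟨aa i, haa i, aa, fun j => ?_, hb⟩
      by_cases hji : j = i
      · subst hji
        rw [dif_pos rfl, ML.eval_cast rfl, ML.mem_cast_set rfl, ML.mem_eval_var,
          ML.Val.upd_same rfl]
      · rw [dif_neg hji, hagree j]
        exact haa j
    · rintro ⟨a, hai, aa, haa, hb⟩
      refine ⟨aa, fun j => ?_, hb⟩
      by_cases hji : j = i
      · subst hji
        have h3 := haa j
        rw [dif_pos rfl, ML.eval_cast rfl, ML.mem_cast_set rfl, ML.mem_eval_var,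
          ML.Val.upd_same rfl] at h3
        simp only [cast_eq] at h3
        rw [h3]
        exact hai
      · have h3 := haa j
        rw [dif_neg hji, hagree j] at h3
        exact h3
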